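/- Let s ≥ 2 and let (a_n) be a strictly increasing sequence of natural numbers, all greater than 1 and pairwise relatively prime. If ∑ 1/a_n > P(s), where P(s) = ∑_{p prime} 1/p^s, then there exists k such that a_k has at most s − 1 prime factors counted with multiplicity. -/

import Mathlib

open scoped ENNReal

theorem stmt_4 (s : ℕ) (hs : 2 ≤ s) (a : ℕ → ℕ) (hmono : StrictMono a)
    (h1 : ∀ n, 1 < a n)
    (hcop : ∀ m n, m ≠ n → Nat.Coprime (a m) (a n))
    (hgt : (∑' p : Nat.Primes, (1 : ℝ≥0∞) / (p : ℕ) ^ s) < ∑' n, (1 : ℝ≥0∞) / a n) :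
    ∃ k, (a k).primeFactorsList.length ≤ s - 1 := by
  by_contra hcon
  push_neg at hcon
  have hΩ : ∀ k, s ≤ (a k).primeFactorsList.length := by
    intro k
    have := hcon k
    omega
  have hprime : ∀ k, ((a k).minFac).Prime := fun k => Nat.minFac_prime (h1 k).ne'
  set i : ℕ → Nat.Primes := fun k => ⟨(a k).minFac, hprime k⟩ with hi
  have hinj : Function.Injective i := by
    intro m n hmn
    by_contra hne
    have hd : (a m).minFac ∣ Nat.gcd (a m) (a n) := by
      apply Nat.dvd_gcd (Nat.minFac_dvd _)
      have : (a n).minFac ∣ a n := Nat.minFac_dvd _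
      have heq : (a m).minFac = (a n).minFac := congrArg Subtype.val hmn
      rw [heq]; exact this
    rw [hcop m n hne] at hd
    exact (hprime m).one_lt.ne' (Nat.dvd_one.mp hd)
  have hle : ∀ k, (a k).minFac ^ s ≤ a k := by
    intro k
    calc (a k).minFac ^ s ≤ (a k).minFac ^ (a k).primeFactorsList.length :=
          Nat.pow_le_pow_right (Nat.le_of_lt (hprime k).one_lt) (hΩ k)
      _ ≤ (a k).primeFactorsList.prod := by
          apply List.pow_card_le_prod
          intro x hx
          exact Nat.minFac_le_of_dvd (Nat.prime_of_mem_primeFactorsList hx).two_le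
            (Nat.dvd_of_mem_primeFactorsList hx)
      _ = a k := Nat.prod_primeFactorsList (Nat.lt_of_lt_of_le Nat.zero_lt_one (h1 k).le).ne'
  have hsum : (∑' n, (1 : ℝ≥0∞) / a n) ≤ ∑' p : Nat.Primes, (1 : ℝ≥0∞) / (p : ℕ) ^ s := by
    apply Summable.tsum_le_tsum_of_inj i hinj (fun _ _ => zero_le) _ ENNReal.summable ENNReal.summable
    intro k
    simp only [hi]
    apply ENNReal.div_le_div_left
    exact_mod_cast hle k
  exact absurd hsum (not_le.mpr hgt)
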